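/- Degenerate Poincaré inequality with the sharp combined constant: under the degeneracy assumptions with μ < 2, for all u in the weighted space with u(1)=0, ‖u‖²_{L²(0,1)} ≤ C_a · ∫₀¹ a(x)|u'(x)|² dx, where C_a = (1/a(1)) · min{4, 1/(2-μ)}. -/

import Mathlib

set_option maxHeartbeats 1000000

open MeasureTheory Set
open scoped ENNReal

private lemma measurable_rpow_const' (p : ℝ) : Measurable fun t : ℝ => t ^ p := by
  have h : (fun t : ℝ => t ^ p) = fun t =>
      if 0 < t then Real.exp (Real.log t * p)
      else if t = 0 then (if p = 0 then 1 else 0)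
      else Real.exp (Real.log t * p) * Real.cos (p * Real.pi) := by
    funext t
    rcases lt_trichotomy t 0 with h1 | h1 | h1
    · rw [if_neg (by linarith), if_neg (by linarith), Real.rpow_def_of_neg h1]
    · subst h1
      rw [if_neg (lt_irrefl _), if_pos rfl]
      by_cases hp : p = 0 <;> simp [hp, Real.zero_rpow]
    · rw [if_pos h1, Real.rpow_def_of_pos h1]
  rw [h]
  exact Measurable.ite (measurableSet_lt measurable_const measurable_id)
    ((Real.measurable_log.mul measurable_const).exp)
    (Measurable.ite (MeasurableSet.singleton 0) measurable_const
      (((Real.measurable_log.mul measurable_const).exp).mul measurable_const))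

private lemma core_swap (V M : ℝ → ℝ≥0∞) (hV : Measurable V) (hM : Measurable M) :
    (∫⁻ x in Ioo (0:ℝ) 1, V x * ∫⁻ t in Ioc x 1, M t)
      = ∫⁻ t in Ioo (0:ℝ) 1, (∫⁻ x in Ioo (0:ℝ) t, V x) * M t := by
  have h1 : (∫⁻ x in Ioo (0:ℝ) 1, V x * ∫⁻ t in Ioc x 1, M t)
      = ∫⁻ x in Ioo (0:ℝ) 1, ∫⁻ t in Ioo (0:ℝ) 1, (if x < t then V x * M t else 0) := by
    refine setLIntegral_congr_fun measurableSet_Ioo (fun x hx => ?_)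
    have e0 : (∫⁻ t in Ioc x 1, M t) = ∫⁻ t in Ioo x 1, M t :=
      (setLIntegral_congr Ioo_ae_eq_Ioc).symm
    have hset : Ioi x ∩ Ioo (0:ℝ) 1 = Ioo x 1 := by
      ext s
      simp only [mem_inter_iff, mem_Ioi, mem_Ioo]
      constructor
      · rintro ⟨h1, _, h3⟩; exact ⟨h1, h3⟩
      · rintro ⟨h1, h2⟩; exact ⟨h1, lt_trans hx.1 h1, h2⟩
    have e1 : (∫⁻ t in Ioo (0:ℝ) 1, (Ioi x).indicator M t) = ∫⁻ t in Ioo x 1, M t := by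
      rw [lintegral_indicator measurableSet_Ioi, Measure.restrict_restrict measurableSet_Ioi,
        hset]
    rw [e0, ← e1, ← lintegral_const_mul (V x) (hM.indicator measurableSet_Ioi)]
    refine lintegral_congr fun t => ?_
    simp only [Set.indicator_apply, mem_Ioi, mul_ite, mul_zero]
  have hmeas : Measurable (Function.uncurry fun x t : ℝ => if x < t then V x * M t else 0) :=
    Measurable.ite (measurableSet_lt measurable_fst measurable_snd)
      ((hV.comp measurable_fst).mul (hM.comp measurable_snd)) measurable_const
  rw [h1, lintegral_lintegral_swap hmeas.aemeasurable]
  refine setLIntegral_congr_fun measurableSet_Ioo (fun t ht => ?_)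
  have hset : Iio t ∩ Ioo (0:ℝ) 1 = Ioo (0:ℝ) t := by
    ext s
    simp only [mem_inter_iff, mem_Iio, mem_Ioo]
    constructor
    · rintro ⟨h1, h2, _⟩; exact ⟨h2, h1⟩
    · rintro ⟨h1, h2⟩; exact ⟨h2, h1, lt_trans h2 ht.2⟩
  have e2 : (∫⁻ x in Ioo (0:ℝ) 1, (Iio t).indicator (fun x => V x * M t) x)
      = ∫⁻ x in Ioo (0:ℝ) t, V x * M t := by
    rw [lintegral_indicator measurableSet_Iio, Measure.restrict_restrict measurableSet_Iio, hset]
  calc (∫⁻ x in Ioo (0:ℝ) 1, if x < t then V x * M t else 0)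
      = ∫⁻ x in Ioo (0:ℝ) 1, (Iio t).indicator (fun x => V x * M t) x := by
        refine lintegral_congr fun x => ?_
        simp only [Set.indicator_apply, mem_Iio]
    _ = ∫⁻ x in Ioo (0:ℝ) t, V x * M t := e2
    _ = (∫⁻ x in Ioo (0:ℝ) t, V x) * M t := lintegral_mul_const _ hV

private lemma abound (a ad : ℝ → ℝ) (μ : ℝ)
    (hcont : ContinuousOn a (Icc 0 1))
    (hderiv : ∀ x ∈ Ioc (0:ℝ) 1, HasDerivAt a (ad x) x)
    (hpos : ∀ x ∈ Ioc (0:ℝ) 1, 0 < a x)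
    (hμ : ∀ x ∈ Ioc (0:ℝ) 1, x * |ad x| ≤ μ * a x) :
    ∀ t ∈ Ioc (0:ℝ) 1, a 1 * t ^ μ ≤ a t := by
  intro t ht
  have ht0 : 0 < t := ht.1
  rcases eq_or_lt_of_le ht.2 with h1 | h1
  · rw [h1]; simp [Real.one_rpow]
  · set f : ℝ → ℝ := fun x => Real.log (a x) - μ * Real.log x with hf
    have hsub : Icc t 1 ⊆ Ioc (0:ℝ) 1 := fun x hx => ⟨lt_of_lt_of_le ht0 hx.1, hx.2⟩
    have hcf : ContinuousOn f (Icc t 1) := by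
      apply ContinuousOn.sub
      · exact ContinuousOn.log (hcont.mono fun x hx => ⟨le_trans ht0.le hx.1, hx.2⟩)
          (fun x hx => (hpos x (hsub hx)).ne')
      · exact continuousOn_const.mul
          (ContinuousOn.log continuousOn_id fun x hx => (lt_of_lt_of_le ht0 hx.1).ne')
    have hdf : ∀ x ∈ interior (Icc t 1), HasDerivAt f (ad x / a x - μ * x⁻¹) x := by
      rw [interior_Icc]; intro x hx
      have hxm : x ∈ Ioc (0:ℝ) 1 := ⟨lt_trans ht0 hx.1, hx.2.le⟩
      exact (HasDerivAt.log (hderiv x hxm) (hpos x hxm).ne').sub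
        ((Real.hasDerivAt_log (lt_trans ht0 hx.1).ne').const_mul μ)
    have hanti : AntitoneOn f (Icc t 1) := by
      apply antitoneOn_of_deriv_nonpos (convex_Icc t 1) hcf
      · intro x hx; exact (hdf x hx).differentiableAt.differentiableWithinAt
      · intro x hx
        rw [(hdf x hx).deriv]
        rw [interior_Icc] at hx
        have hxm : x ∈ Ioc (0:ℝ) 1 := ⟨lt_trans ht0 hx.1, hx.2.le⟩
        have hx0 : 0 < x := hxm.1
        have hax : 0 < a x := hpos x hxm
        have h3 : x * ad x ≤ μ * a x :=
          le_trans (mul_le_mul_of_nonneg_left (le_abs_self _) hx0.le) (hμ x hxm)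
        rw [sub_nonpos, div_le_iff₀ hax]
        have h4 : x⁻¹ * (x * ad x) ≤ x⁻¹ * (μ * a x) :=
          mul_le_mul_of_nonneg_left h3 (inv_nonneg.mpr hx0.le)
        rw [← mul_assoc, inv_mul_cancel₀ hx0.ne', one_mul] at h4
        exact h4.trans_eq (by ring)
    have hle : f 1 ≤ f t := hanti (left_mem_Icc.mpr ht.2) (right_mem_Icc.mpr ht.2) ht.2
    have hf1 : f 1 = Real.log (a 1) := by simp [hf]
    have ha1 : 0 < a 1 := hpos 1 ⟨one_pos, le_refl 1⟩
    have key : Real.log (a 1 * t ^ μ) ≤ Real.log (a t) := by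
      rw [Real.log_mul ha1.ne' (Real.rpow_pos_of_pos ht0 μ).ne', Real.log_rpow ht0]
      rw [hf1] at hle
      simp only [hf] at hle
      linarith
    calc a 1 * t ^ μ
        = Real.exp (Real.log (a 1 * t ^ μ)) :=
          (Real.exp_log (mul_pos ha1 (Real.rpow_pos_of_pos ht0 μ))).symm
      _ ≤ Real.exp (Real.log (a t)) := Real.exp_le_exp.mpr key
      _ = a t := Real.exp_log (hpos t ht)

private lemma cs_bound (u D : ℝ → ℝ) (hmD : Measurable D) (p : ℝ) {x : ℝ} (hx : x ∈ Ioo (0:ℝ) 1)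
    (hu : ∀ t ∈ Icc x 1, HasDerivAt u (D t) t) (hu1 : u 1 = 0)
    (hInt : IntegrableOn D (Ioc x 1)) :
    ENNReal.ofReal (u x ^ 2) ≤ (∫⁻ t in Ioc x 1, ENNReal.ofReal (t ^ (-p)))
      * ∫⁻ t in Ioc x 1, ENNReal.ofReal (t ^ p * D t ^ 2) := by
  have hx1 : x ≤ 1 := hx.2.le
  have hFTC : ∫ t in x..1, D t = u 1 - u x :=
    intervalIntegral.integral_eq_sub_of_hasDerivAt (by rwa [uIcc_of_le hx1])
      ((intervalIntegrable_iff_integrableOn_Ioc_of_le hx1).mpr hInt)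
  have habs : |u x| ≤ ∫ t in Ioc x 1, |D t| := by
    calc |u x| = |∫ t in x..1, D t| := by rw [hFTC, hu1, zero_sub, abs_neg]
      _ ≤ ∫ t in x..1, |D t| := intervalIntegral.abs_integral_le_integral_abs hx1
      _ = ∫ t in Ioc x 1, |D t| := intervalIntegral.integral_of_le hx1
  have h0 : ENNReal.ofReal |u x| ≤ ∫⁻ t in Ioc x 1, ENNReal.ofReal |D t| := by
    rw [← ofReal_integral_eq_lintegral_ofReal hInt.abs
      (Filter.Eventually.of_forall fun t => abs_nonneg _)]
    exact ENNReal.ofReal_le_ofReal habs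
  set f : ℝ → ℝ≥0∞ := fun t => ENNReal.ofReal (t ^ (-p/2)) with hfdef
  set g : ℝ → ℝ≥0∞ := fun t => ENNReal.ofReal (t ^ (p/2) * |D t|) with hgdef
  have hsplit : (∫⁻ t in Ioc x 1, ENNReal.ofReal |D t|) = ∫⁻ t in Ioc x 1, (f * g) t := by
    refine setLIntegral_congr_fun measurableSet_Ioc (fun t ht => ?_)
    have ht0 : (0:ℝ) < t := lt_trans hx.1 ht.1
    simp only [Pi.mul_apply, hfdef, hgdef]
    rw [← ENNReal.ofReal_mul (Real.rpow_nonneg ht0.le _), ← mul_assoc, ← Real.rpow_add ht0,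
      show -p/2 + p/2 = 0 by ring, Real.rpow_zero, one_mul]
  have hf : AEMeasurable f (volume.restrict (Ioc x 1)) :=
    ((measurable_rpow_const' _).ennreal_ofReal).aemeasurable
  have hg : AEMeasurable g (volume.restrict (Ioc x 1)) :=
    (((measurable_rpow_const' _).mul hmD.abs).ennreal_ofReal).aemeasurable
  have hpq : Real.HolderConjugate 2 2 := Real.HolderConjugate.two_two
  have hholder := ENNReal.lintegral_mul_le_Lp_mul_Lq (volume.restrict (Ioc x 1)) hpq hf hg
  have hfp : (∫⁻ t in Ioc x 1, f t ^ (2:ℝ)) = ∫⁻ t in Ioc x 1, ENNReal.ofReal (t ^ (-p)) := by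
    refine setLIntegral_congr_fun measurableSet_Ioc (fun t ht => ?_)
    have ht0 : (0:ℝ) < t := lt_trans hx.1 ht.1
    simp only [hfdef]
    rw [ENNReal.ofReal_rpow_of_nonneg (Real.rpow_nonneg ht0.le _) (by norm_num),
      ← Real.rpow_mul ht0.le]
    norm_num
  have hgp : (∫⁻ t in Ioc x 1, g t ^ (2:ℝ))
      = ∫⁻ t in Ioc x 1, ENNReal.ofReal (t ^ p * D t ^ 2) := by
    refine setLIntegral_congr_fun measurableSet_Ioc (fun t ht => ?_)
    have ht0 : (0:ℝ) < t := lt_trans hx.1 ht.1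
    simp only [hgdef]
    rw [ENNReal.ofReal_rpow_of_nonneg (mul_nonneg (Real.rpow_nonneg ht0.le _) (abs_nonneg _))
      (by norm_num)]
    congr 1
    have habs2 : |D t| ^ (2:ℝ) = D t ^ 2 := by
      rw [show (2:ℝ) = ((2:ℕ):ℝ) by norm_num, Real.rpow_natCast, sq_abs]
    rw [Real.mul_rpow (Real.rpow_nonneg ht0.le _) (abs_nonneg _), habs2,
      ← Real.rpow_mul ht0.le]
    norm_num
  calc ENNReal.ofReal (u x ^ 2)
      = (ENNReal.ofReal |u x|) ^ 2 := by rw [← ENNReal.ofReal_pow (abs_nonneg _), sq_abs]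
    _ ≤ (∫⁻ t in Ioc x 1, ENNReal.ofReal |D t|) ^ 2 := pow_le_pow_left₀ zero_le h0 2
    _ = (∫⁻ t in Ioc x 1, (f * g) t) ^ 2 := by rw [hsplit]
    _ ≤ ((∫⁻ t in Ioc x 1, f t ^ (2:ℝ)) ^ (1/(2:ℝ))
          * (∫⁻ t in Ioc x 1, g t ^ (2:ℝ)) ^ (1/(2:ℝ))) ^ 2 :=
        pow_le_pow_left₀ zero_le hholder 2
    _ = (∫⁻ t in Ioc x 1, f t ^ (2:ℝ)) * (∫⁻ t in Ioc x 1, g t ^ (2:ℝ)) := by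
        rw [mul_pow, ← ENNReal.rpow_natCast (_ ^ (1/(2:ℝ))) 2,
          ← ENNReal.rpow_natCast (_ ^ (1/(2:ℝ))) 2, ← ENNReal.rpow_mul, ← ENNReal.rpow_mul]
        norm_num
    _ = _ := by rw [hfp, hgp]

theorem degenerate_poincare_sharp
    (a ad : ℝ → ℝ) (μ : ℝ)
    (hcont : ContinuousOn a (Set.Icc 0 1))
    (hderiv : ∀ x ∈ Set.Ioc (0:ℝ) 1, HasDerivAt a (ad x) x)
    (hpos : ∀ x ∈ Set.Ioc (0:ℝ) 1, 0 < a x)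
    (ha0 : a 0 = 0)
    (hμ0 : 0 ≤ μ) (hμ2 : μ < 2)
    (hμ : ∀ x ∈ Set.Ioc (0:ℝ) 1, x * |ad x| ≤ μ * a x)
    (u ud : ℝ → ℝ)
    (hu2 : MeasureTheory.IntegrableOn (fun x => (u x) ^ 2) (Set.Ioo 0 1))
    (huderiv : ∀ x ∈ Set.Ioc (0:ℝ) 1, HasDerivAt u (ud x) x)
    (hu1 : u 1 = 0)
    (hud2 : MeasureTheory.IntegrableOn (fun x => a x * (ud x) ^ 2) (Set.Ioo 0 1)) :
    ∫ x in Set.Ioo (0:ℝ) 1, (u x) ^ 2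
      ≤ ((1 / a 1) * min 4 (1 / (2 - μ))) * ∫ x in Set.Ioo (0:ℝ) 1, a x * (ud x) ^ 2 := by
  have hc : 0 < a 1 := hpos 1 ⟨one_pos, le_refl 1⟩
  have h2μ : (0:ℝ) < 2 - μ := by linarith
  set c := a 1 with hcdef
  set K := min (4:ℝ) (1/(2-μ)) with hKdef
  set C := (1/c) * K with hCdef
  have hK0 : 0 ≤ K := le_min (by norm_num) (by positivity)
  have hC0 : 0 ≤ C := mul_nonneg (by positivity) hK0
  set D := deriv u with hDdef
  have hDud : ∀ t ∈ Ioc (0:ℝ) 1, D t = ud t := fun t ht => (huderiv t ht).deriv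
  have hmD : Measurable D := measurable_deriv u
  have hgoalrw : ∫ x in Ioo (0:ℝ) 1, a x * (ud x) ^ 2 = ∫ x in Ioo (0:ℝ) 1, a x * D x ^ 2 :=
    setIntegral_congr_fun measurableSet_Ioo fun t ht => by rw [hDud t ⟨ht.1, ht.2.le⟩]
  have haD2 : IntegrableOn (fun t => a t * D t ^ 2) (Ioo (0:ℝ) 1) := by
    refine hud2.congr_fun (fun t ht => ?_) measurableSet_Ioo
    rw [hDud t ⟨ht.1, ht.2.le⟩]
  have hlow : ∀ t ∈ Ioc (0:ℝ) 1, c * t ^ μ ≤ a t := abound a ad μ hcont hderiv hpos hμ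
  have hDer : ∀ x ∈ Ioo (0:ℝ) 1, ∀ t ∈ Icc x 1, HasDerivAt u (D t) t := by
    intro x hx t ht
    have htm : t ∈ Ioc (0:ℝ) 1 := ⟨lt_of_lt_of_le hx.1 ht.1, ht.2⟩
    rw [hDud t htm]; exact huderiv t htm
  have hInt : ∀ x ∈ Ioo (0:ℝ) 1, IntegrableOn D (Ioc x 1) := by
    intro x hx
    have hx0 := hx.1
    have hε : (0:ℝ) < c * x ^ μ := mul_pos hc (Real.rpow_pos_of_pos hx0 μ)
    have hbig : IntegrableOn (fun t => a t * D t ^ 2) (Ioc x 1) := by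
      rw [integrableOn_Ioc_iff_integrableOn_Ioo]
      exact haD2.mono_set (Ioo_subset_Ioo hx0.le le_rfl)
    have hone : IntegrableOn (fun _ : ℝ => (1:ℝ)) (Ioc x 1) :=
      integrableOn_const measure_Ioc_lt_top.ne
    have hmaj : IntegrableOn (fun t => ((1:ℝ) + (c * x ^ μ)⁻¹ * (a t * D t ^ 2))/2) (Ioc x 1) :=
      (hone.add (hbig.const_mul (c * x ^ μ)⁻¹)).div_const 2
    refine Integrable.mono' hmaj hmD.aestronglyMeasurable ?_
    rw [ae_restrict_iff' measurableSet_Ioc]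
    refine Filter.Eventually.of_forall fun t ht => ?_
    have hat : c * x ^ μ ≤ a t :=
      le_trans (mul_le_mul_of_nonneg_left (Real.rpow_le_rpow hx0.le ht.1.le hμ0) hc.le)
        (hlow t ⟨lt_trans hx0 ht.1, ht.2⟩)
    have h1 : 1 ≤ (c * x ^ μ)⁻¹ * a t := by
      have := mul_le_mul_of_nonneg_left hat (inv_nonneg.mpr hε.le)
      rwa [inv_mul_cancel₀ hε.ne'] at this
    have h2 : D t ^ 2 ≤ (c * x ^ μ)⁻¹ * (a t * D t ^ 2) := by nlinarith [sq_nonneg (D t)]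
    rw [Real.norm_eq_abs]
    nlinarith [sq_abs (D t), sq_nonneg (|D t| - 1)]
  -- the common machinery, for a given exponent p
  have main : ∀ p : ℝ,
      (∀ t ∈ Ioo (0:ℝ) 1,
        (∫⁻ x in Ioo (0:ℝ) t, ∫⁻ s in Ioc x 1, ENNReal.ofReal (s ^ (-p)))
          * ENNReal.ofReal (t ^ p * D t ^ 2) ≤ ENNReal.ofReal (C * (a t * D t ^ 2))) →
      (∫⁻ x in Ioo (0:ℝ) 1, ENNReal.ofReal (u x ^ 2))
        ≤ ENNReal.ofReal C * ∫⁻ t in Ioo (0:ℝ) 1, ENNReal.ofReal (a t * D t ^ 2) := by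
    intro p hpt
    set GG : ℝ → ℝ≥0∞ := fun x => ∫⁻ s in Ioc x 1, ENNReal.ofReal (s ^ (-p)) with hGGdef
    set Mf : ℝ → ℝ≥0∞ := fun t => ENNReal.ofReal (t ^ p * D t ^ 2) with hMfdef
    set JJ : ℝ → ℝ≥0∞ := fun x => ∫⁻ t in Ioc x 1, Mf t with hJJdef
    have hGmeas : Measurable GG :=
      Antitone.measurable fun x y hxy => lintegral_mono_set (Ioc_subset_Ioc_left hxy)
    have hMf : Measurable Mf := ((measurable_rpow_const' p).mul (hmD.pow_const 2)).ennreal_ofReal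
    have hJmeas : Measurable JJ :=
      Antitone.measurable fun x y hxy => lintegral_mono_set (Ioc_subset_Ioc_left hxy)
    have haD2meas : AEMeasurable (fun t => ENNReal.ofReal (a t * D t ^ 2))
        (volume.restrict (Ioo (0:ℝ) 1)) :=
      ENNReal.measurable_ofReal.comp_aemeasurable haD2.aestronglyMeasurable.aemeasurable
    calc (∫⁻ x in Ioo (0:ℝ) 1, ENNReal.ofReal (u x ^ 2))
        ≤ ∫⁻ x in Ioo (0:ℝ) 1, GG x * JJ x :=
          setLIntegral_mono (hGmeas.mul hJmeas)
            (fun x hx => cs_bound u D hmD p hx (hDer x hx) hu1 (hInt x hx))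
      _ = ∫⁻ t in Ioo (0:ℝ) 1, (∫⁻ x in Ioo (0:ℝ) t, GG x) * Mf t := core_swap GG Mf hGmeas hMf
      _ ≤ ∫⁻ t in Ioo (0:ℝ) 1, ENNReal.ofReal C * ENNReal.ofReal (a t * D t ^ 2) :=
          setLIntegral_mono_ae (haD2meas.const_mul _)
            (Filter.Eventually.of_forall fun t ht =>
              (hpt t ht).trans_eq (ENNReal.ofReal_mul hC0))
      _ = ENNReal.ofReal C * ∫⁻ t in Ioo (0:ℝ) 1, ENNReal.ofReal (a t * D t ^ 2) :=
          lintegral_const_mul'' _ haD2meas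
  have hc' : ∀ t ∈ Ioc (0:ℝ) 1, t ^ μ ≤ 1/c * a t := by
    intro t ht
    have h6 : c⁻¹ * (c * t ^ μ) ≤ c⁻¹ * a t :=
      mul_le_mul_of_nonneg_left (hlow t ht) (inv_nonneg.mpr hc.le)
    rw [← mul_assoc, inv_mul_cancel₀ hc.ne', one_mul] at h6
    rwa [one_div]
  have hlin : (∫⁻ x in Ioo (0:ℝ) 1, ENNReal.ofReal (u x ^ 2))
      ≤ ENNReal.ofReal C * ∫⁻ t in Ioo (0:ℝ) 1, ENNReal.ofReal (a t * D t ^ 2) := by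
    rcases le_or_gt (1/(2-μ)) 4 with hA | hB
    · -- constant 1/(2-μ), exponent p = μ
      have hKA : K = 1/(2-μ) := min_eq_right hA
      refine main μ ?_
      intro t ht
      have ht0 : 0 < t := ht.1
      have hTall : (∫⁻ x in Ioo (0:ℝ) 1, ∫⁻ s in Ioc x 1, ENNReal.ofReal (s ^ (-μ)))
          = ENNReal.ofReal (1/(2-μ)) := by
        have hsw := core_swap (fun _ => 1) (fun s => ENNReal.ofReal (s ^ (-μ)))
          measurable_const ((measurable_rpow_const' _).ennreal_ofReal)
        simp only [one_mul] at hsw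
        rw [hsw]
        have e1 : ∀ t' ∈ Ioo (0:ℝ) 1,
            (∫⁻ _x in Ioo (0:ℝ) t', (1:ℝ≥0∞)) * ENNReal.ofReal (t' ^ (-μ))
              = ENNReal.ofReal (t' ^ (1-μ)) := by
          intro t' ht'
          rw [setLIntegral_one, Real.volume_Ioo, sub_zero, ← ENNReal.ofReal_mul ht'.1.le]
          congr 1
          rw [show (1:ℝ)-μ = 1 + -μ by ring, Real.rpow_add ht'.1, Real.rpow_one]
        rw [setLIntegral_congr_fun measurableSet_Ioo e1]
        have hint : IntegrableOn (fun s : ℝ => s ^ (1-μ)) (Ioo (0:ℝ) 1) := by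
          have h := intervalIntegral.intervalIntegrable_rpow' (show (-1:ℝ) < 1-μ by linarith)
            (a := 0) (b := 1)
          rwa [intervalIntegrable_iff_integrableOn_Ioo_of_le zero_le_one] at h
        have hnn : 0 ≤ᵐ[volume.restrict (Ioo (0:ℝ) 1)] fun s : ℝ => s ^ (1-μ) := by
          filter_upwards [self_mem_ae_restrict measurableSet_Ioo] with s hs
          exact Real.rpow_nonneg hs.1.le _
        rw [← ofReal_integral_eq_lintegral_ofReal hint hnn]
        congr 1
        rw [← integral_Ioc_eq_integral_Ioo, ← intervalIntegral.integral_of_le zero_le_one,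
          integral_rpow (Or.inl (by linarith))]
        rw [Real.one_rpow, Real.zero_rpow (show (1:ℝ)-μ+1 ≠ 0 by intro h; nlinarith),
          show (1:ℝ)-μ+1 = 2-μ by ring]
        norm_num
      have hmono : (∫⁻ x in Ioo (0:ℝ) t, ∫⁻ s in Ioc x 1, ENNReal.ofReal (s ^ (-μ)))
          ≤ ENNReal.ofReal (1/(2-μ)) := by
        rw [← hTall]
        exact lintegral_mono_set (Ioo_subset_Ioo le_rfl ht.2.le)
      calc (∫⁻ x in Ioo (0:ℝ) t, ∫⁻ s in Ioc x 1, ENNReal.ofReal (s ^ (-μ)))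
            * ENNReal.ofReal (t ^ μ * D t ^ 2)
          ≤ ENNReal.ofReal (1/(2-μ)) * ENNReal.ofReal (t ^ μ * D t ^ 2) :=
            mul_le_mul_left hmono _
        _ = ENNReal.ofReal ((1/(2-μ)) * (t ^ μ * D t ^ 2)) :=
            (ENNReal.ofReal_mul (by positivity)).symm
        _ ≤ ENNReal.ofReal (C * (a t * D t ^ 2)) := by
            apply ENNReal.ofReal_le_ofReal
            have h5 := hc' t ⟨ht0, ht.2.le⟩
            have hD2 : (0:ℝ) ≤ D t ^ 2 := sq_nonneg _
            rw [hCdef, hKA]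
            nlinarith [mul_le_mul_of_nonneg_right h5 hD2,
              le_of_lt (one_div_pos.mpr h2μ)]
    · -- constant 4, exponent p = 3/2
      have hKB : K = 4 := min_eq_left hB.le
      refine main (3/2 : ℝ) ?_
      intro t ht
      have ht0 : 0 < t := ht.1
      have hGB : ∀ x ∈ Ioo (0:ℝ) 1, (∫⁻ s in Ioc x 1, ENNReal.ofReal (s ^ (-(3/2:ℝ))))
          ≤ ENNReal.ofReal (2 * x ^ (-(1/2):ℝ)) := by
        intro x hx
        have hintc : IntegrableOn (fun s : ℝ => s ^ (-(3/2:ℝ))) (Ioc x 1) := by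
          have hco : ContinuousOn (fun s : ℝ => s ^ (-(3/2:ℝ))) (Icc x 1) :=
            ContinuousOn.rpow_const continuousOn_id
              (fun s hs => Or.inl (ne_of_gt (lt_of_lt_of_le hx.1 hs.1)))
          exact (hco.integrableOn_Icc).mono_set Ioc_subset_Icc_self
        have hnn : 0 ≤ᵐ[volume.restrict (Ioc x 1)] fun s : ℝ => s ^ (-(3/2:ℝ)) := by
          filter_upwards [self_mem_ae_restrict measurableSet_Ioc] with s hs
          exact Real.rpow_nonneg (le_of_lt (lt_trans hx.1 hs.1)) _
        rw [← ofReal_integral_eq_lintegral_ofReal hintc hnn]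
        apply ENNReal.ofReal_le_ofReal
        have h0m : (0:ℝ) ∉ Set.uIcc x 1 := by
          rw [Set.uIcc_of_le hx.2.le]
          intro h
          exact absurd h.1 (not_le.mpr hx.1)
        rw [← intervalIntegral.integral_of_le hx.2.le,
          integral_rpow (Or.inr ⟨by norm_num, h0m⟩)]
        rw [Real.one_rpow, show (-(3/2:ℝ)+1) = -(1/2:ℝ) by norm_num]
        have hy : (0:ℝ) ≤ x ^ (-(1/2):ℝ) := Real.rpow_nonneg hx.1.le _
        have he : (1 - x ^ (-(1/2):ℝ))/(-(1/2:ℝ)) = 2 * x ^ (-(1/2):ℝ) - 2 := by ring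
        linarith
      have hH : (∫⁻ x in Ioo (0:ℝ) t, ∫⁻ s in Ioc x 1, ENNReal.ofReal (s ^ (-(3/2:ℝ))))
          ≤ ENNReal.ofReal (4 * t ^ ((1/2):ℝ)) := by
        have step1 : (∫⁻ x in Ioo (0:ℝ) t, ∫⁻ s in Ioc x 1, ENNReal.ofReal (s ^ (-(3/2:ℝ))))
            ≤ ∫⁻ x in Ioo (0:ℝ) t, ENNReal.ofReal (2 * x ^ (-(1/2):ℝ)) :=
          setLIntegral_mono (((measurable_rpow_const' _).const_mul 2).ennreal_ofReal)
            (fun x hx' => hGB x ⟨hx'.1, lt_trans hx'.2 ht.2⟩)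
        refine step1.trans ?_
        have hint2 : IntegrableOn (fun x : ℝ => 2 * x ^ (-(1/2):ℝ)) (Ioo (0:ℝ) t) := by
          have h := (intervalIntegral.intervalIntegrable_rpow'
            (show (-1:ℝ) < -(1/2) by norm_num) (a := 0) (b := t)).const_mul 2
          rwa [intervalIntegrable_iff_integrableOn_Ioo_of_le ht0.le] at h
        have hnn : 0 ≤ᵐ[volume.restrict (Ioo (0:ℝ) t)] fun x : ℝ => 2 * x ^ (-(1/2):ℝ) := by
          filter_upwards [self_mem_ae_restrict measurableSet_Ioo] with s hs
          have := Real.rpow_nonneg hs.1.le (-(1/2):ℝ)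
          simp only [Pi.zero_apply]
          linarith
        rw [← ofReal_integral_eq_lintegral_ofReal hint2 hnn]
        apply ENNReal.ofReal_le_ofReal
        rw [← integral_Ioc_eq_integral_Ioo, ← intervalIntegral.integral_of_le ht0.le,
          intervalIntegral.integral_const_mul, integral_rpow (Or.inl (by norm_num))]
        rw [Real.zero_rpow (show (-(1/2:ℝ)+1) ≠ 0 by norm_num),
          show (-(1/2:ℝ)+1) = (1/2:ℝ) by norm_num]
        have he : 2 * ((t ^ ((1/2):ℝ) - 0)/(1/2:ℝ)) = 4 * t ^ ((1/2):ℝ) := by ring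
        linarith
      calc (∫⁻ x in Ioo (0:ℝ) t, ∫⁻ s in Ioc x 1, ENNReal.ofReal (s ^ (-(3/2:ℝ))))
            * ENNReal.ofReal (t ^ (3/2:ℝ) * D t ^ 2)
          ≤ ENNReal.ofReal (4 * t ^ ((1/2):ℝ)) * ENNReal.ofReal (t ^ (3/2:ℝ) * D t ^ 2) :=
            mul_le_mul_left hH _
        _ = ENNReal.ofReal ((4 * t ^ ((1/2):ℝ)) * (t ^ (3/2:ℝ) * D t ^ 2)) :=
            (ENNReal.ofReal_mul (by positivity)).symm
        _ ≤ ENNReal.ofReal (C * (a t * D t ^ 2)) := by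
            apply ENNReal.ofReal_le_ofReal
            have e1 : t ^ ((1/2):ℝ) * t ^ ((3/2):ℝ) = t ^ (2:ℝ) := by
              rw [← Real.rpow_add ht0]; norm_num
            have e2 : t ^ (2:ℝ) ≤ t ^ μ :=
              Real.rpow_le_rpow_of_exponent_ge ht0 ht.2.le hμ2.le
            have h5 := hc' t ⟨ht0, ht.2.le⟩
            have hD2 : (0:ℝ) ≤ D t ^ 2 := sq_nonneg _
            have e1' : t ^ ((1/2):ℝ) * t ^ ((3/2):ℝ) * D t ^ 2 = t ^ (2:ℝ) * D t ^ 2 := by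
              rw [e1]
            rw [hCdef, hKB]
            nlinarith [e1', mul_le_mul_of_nonneg_right e2 hD2,
              mul_le_mul_of_nonneg_right h5 hD2]
  have hIint : 0 ≤ᵐ[volume.restrict (Ioo (0:ℝ) 1)] fun t => a t * D t ^ 2 := by
    filter_upwards [self_mem_ae_restrict measurableSet_Ioo] with t ht
    exact mul_nonneg (hpos t ⟨ht.1, ht.2.le⟩).le (sq_nonneg _)
  have hIeq := ofReal_integral_eq_lintegral_ofReal haD2 hIint
  have hueq := ofReal_integral_eq_lintegral_ofReal hu2
    (Filter.Eventually.of_forall fun x => sq_nonneg _)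
  have hI0 : 0 ≤ ∫ t in Ioo (0:ℝ) 1, a t * D t ^ 2 := integral_nonneg_of_ae hIint
  rw [hgoalrw]
  have hfin : ENNReal.ofReal (∫ x in Ioo (0:ℝ) 1, u x ^ 2)
      ≤ ENNReal.ofReal (C * ∫ t in Ioo (0:ℝ) 1, a t * D t ^ 2) := by
    rw [hueq, ENNReal.ofReal_mul hC0, hIeq]
    exact hlin
  exact (ENNReal.ofReal_le_ofReal_iff (mul_nonneg hC0 hI0)).mp hfin
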